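/- Let ρ be a quantum state and σ a positive semidefinite operator with Tr(Π⊥ ρ) > ε, where Π⊥ projects onto ker(σ). Then there is no Hermitian R with R ≤ ρ, ‖ρ − R‖₊ ≤ ε, and Π⊥ R Π⊥ = 0. In particular the Hermitian-smoothed collision divergence inf{‖R‖²_{B,σ} : R Hermitian, R ≤ ρ, ‖ρ−R‖₊ ≤ ε} is infinite. -/

import Mathlib

open Matrix
open scoped ComplexOrder

/-- The square root of a positive semidefinite matrix (Mathlib's former `Matrix.PosSemidef.sqrt`). -/
noncomputable def Matrix.PosSemidef.sqrt {n 𝕜 : Type*} [Fintype n] [RCLike 𝕜] [DecidableEq n]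
    {A : Matrix n n 𝕜} (hA : A.PosSemidef) : Matrix n n 𝕜 :=
  hA.1.eigenvectorUnitary.1 * diagonal ((↑) ∘ (√·) ∘ hA.1.eigenvalues) *
    (star hA.1.eigenvectorUnitary : Matrix n n 𝕜)

/-- The Schatten 1-norm (trace norm) of a complex matrix: `Tr √(XᴴX)`. -/
noncomputable def traceNorm {n : Type*} [Fintype n] [DecidableEq n] (X : Matrix n n ℂ) : ℝ :=
  ((Matrix.posSemidef_conjTranspose_mul_self X).sqrt.trace).re

/-- The generalized trace distance norm `‖X‖₊ = (1/2)|Tr X| + (1/2)‖X‖₁`. -/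
noncomputable def normPlus {n : Type*} [Fintype n] [DecidableEq n] (X : Matrix n n ℂ) : ℝ :=
  (1 / 2) * ‖X.trace‖ + (1 / 2) * traceNorm X

lemma trace_nonneg_of_posSemidef {n : Type*} [Fintype n] [DecidableEq n]
    {A : Matrix n n ℂ} (hA : A.PosSemidef) : 0 ≤ A.trace := by
  exact hA.trace_nonneg

lemma traceNorm_of_posSemidef {n : Type*} [Fintype n] [DecidableEq n]
    {A : Matrix n n ℂ} (hA : A.PosSemidef) : traceNorm A = A.trace.re := by
  have h : A ^ 2 = Aᴴ * A := by rw [pow_two, hA.1]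
  have hs : (Matrix.posSemidef_conjTranspose_mul_self A).sqrt = A := by
    have e1 : (Matrix.posSemidef_conjTranspose_mul_self A).sqrt
        = cfc Real.sqrt (Aᴴ * A) := by
      rw [(Matrix.posSemidef_conjTranspose_mul_self A).1.cfc_eq, IsHermitian.cfc,
        Unitary.conjStarAlgAut_apply]
      rfl
    have hsa : IsSelfAdjoint A := hA.1
    rw [e1, ← h, ← cfc_pow_id (R := ℝ) A 2 hsa, ← cfc_comp' Real.sqrt (fun x : ℝ => x ^ 2) A]
    conv_rhs => rw [← cfc_id' ℝ A hsa]
    apply cfc_congr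
    intro x hx
    rw [hA.1.spectrum_real_eq_range_eigenvalues] at hx
    obtain ⟨i, rfl⟩ := hx
    exact Real.sqrt_sq (hA.eigenvalues_nonneg i)
  rw [traceNorm, hs]

lemma normPlus_of_posSemidef {n : Type*} [Fintype n] [DecidableEq n]
    {A : Matrix n n ℂ} (hA : A.PosSemidef) : normPlus A = A.trace.re := by
  have h0 := trace_nonneg_of_posSemidef hA
  have habs : ‖A.trace‖ = A.trace.re := by
    rw [Complex.le_def] at h0
    simp only [Complex.zero_re, Complex.zero_im] at h0
    rw [Complex.norm_def, Complex.normSq_apply, ← h0.2, mul_zero, add_zero,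
      Real.sqrt_mul_self h0.1]
  rw [normPlus, traceNorm_of_posSemidef hA, habs]; ring

/-- Diverging case of the Hermitian-smoothed collision divergence: if `ρ` is a state, `σ ≥ 0`,
and `Tr(Π⊥ ρ) > ε` where `Π⊥` is the orthogonal projection onto `ker σ`, then there is no
Hermitian `R ≤ ρ` with `‖ρ − R‖₊ ≤ ε` and `Π⊥ R Π⊥ = 0` (i.e. `R` in the range of `J_σ`),
so the infimum defining the Hermitian-smoothed divergence is over the empty set (infinite). -/
theorem no_feasible_hermitian_smoothing_of_kernel_weight_gt
    {n : Type*} [Fintype n] [DecidableEq n]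
    (ρ σ P : Matrix n n ℂ) (hρ : ρ.PosSemidef) (hρ1 : ρ.trace = 1) (hσ : σ.PosSemidef)
    (hP : P.IsHermitian) (hPproj : P * P = P)
    (hPker : ∀ v : n → ℂ, σ *ᵥ v = 0 ↔ P *ᵥ v = v)
    (ε : ℝ) (hε : ε ∈ Set.Ico (0 : ℝ) 1)
    (hgt : ε < ((P * ρ).trace).re) :
    ¬ ∃ R : Matrix n n ℂ, R.IsHermitian ∧ (ρ - R).PosSemidef ∧
        normPlus (ρ - R) ≤ ε ∧ P * R * P = 0 := by
  rintro ⟨R, hR, hD, hnorm, hPRP⟩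
  set D := ρ - R with hDdef
  -- trace of P D P equals trace of P ρ
  have hPDP : (P * D * P).trace = (P * ρ).trace := by
    have : P * D * P = P * ρ * P - P * R * P := by
      rw [hDdef]; noncomm_ring
    rw [this, hPRP, sub_zero, trace_mul_cycle, hPproj]
  -- trace of (1-P) D (1-P) is nonneg, hence trace (PDP) ≤ trace D
  have hQ : ((1 - P) * D * (1 - P)ᴴ).PosSemidef := hD.mul_mul_conjTranspose_same (1 - P)
  have hQH : (1 - P)ᴴ = 1 - P := by
    rw [conjTranspose_sub, conjTranspose_one, hP.eq]
  rw [hQH] at hQ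
  have htr : ((1 - P) * D * (1 - P)).trace = D.trace - (P * D * P).trace := by
    have hexp : (1 - P) * D * (1 - P) = D - P * D - D * P + P * D * P := by noncomm_ring
    have h1 : (P * D).trace = (P * D * P).trace := by
      rw [trace_mul_cycle, hPproj]
    have h2 : (D * P).trace = (P * D * P).trace := by
      rw [trace_mul_comm, h1]
    rw [hexp, trace_add, trace_sub, trace_sub, h1, h2]; ring
  have hle : (P * D * P).trace.re ≤ D.trace.re := by
    have h0 := trace_nonneg_of_posSemidef hQ
    rw [htr, Complex.le_def] at h0
    simp only [Complex.zero_re, Complex.sub_re] at h0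
    linarith [h0.1]
  have hDε : D.trace.re ≤ ε := by
    rwa [normPlus_of_posSemidef hD] at hnorm
  rw [hPDP] at hle
  linarith
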